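/- arXiv:2402.15097 — 2 statements merged into one kernel-verified Lean document; each statement's English description precedes it below -/
import Mathlib

section
/- Let n ≥ 1 and for each i = 1,…,n let X_i be a metric space with metric d_i. Suppose for each i there are sequences of maps φ_q^i : X_i → ℝ^{q} (continuous) and ψ_q^i : ℝ^{q} → X_i, with ψ_q^i continuous on the image φ_q^i(X_i), such that the projections P_q^i := ψ_q^i ∘ φ_q^i satisfy lim_{q→∞} sup_{x∈K} d_i(x, P_q^i(x)) = 0 for every compact K ⊆ X_i. Let Y be a real Banach space, let K_i ⊆ X_i be compact sets, and let 𝒢 : K_1 × ⋯ × K_n → Y be continuous. Then for every ε > 0 there exist a positive integer p, positive integers q_1,…,q_n, continuous functions g_j^i : ℝ^{q_i} → ℝ (for 1 ≤ j ≤ p, 1 ≤ i ≤ n), and elements u_j ∈ Y such that sup over (v_1,…,v_n) ∈ K_1 × ⋯ × K_n of ‖𝒢(v_1,…,v_n) − Σ_{j=1}^{p} g_j^1(φ_{q_1}^1(v_1)) ⋯ g_j^n(φ_{q_n}^n(v_n)) · u_j‖_Y is less than ε. -/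
open Filter

lemma my_abs_prod_sub_prod_le {ι : Type*} [DecidableEq ι] (s : Finset ι) (a b : ι → ℝ)
    (ha0 : ∀ i ∈ s, 0 ≤ a i) (ha1 : ∀ i ∈ s, a i ≤ 1)
    (hb0 : ∀ i ∈ s, 0 ≤ b i) (hb1 : ∀ i ∈ s, b i ≤ 1) :
    |∏ i ∈ s, a i - ∏ i ∈ s, b i| ≤ ∑ i ∈ s, |a i - b i| := by
  induction s using Finset.induction with
  | empty => simp
  | @insert j s hj ih =>
    rw [Finset.prod_insert hj, Finset.prod_insert hj, Finset.sum_insert hj]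
    have hA : |∏ i ∈ s, a i - ∏ i ∈ s, b i| ≤ ∑ i ∈ s, |a i - b i| := by
      apply ih
      · exact fun i hi => ha0 i (Finset.mem_insert_of_mem hi)
      · exact fun i hi => ha1 i (Finset.mem_insert_of_mem hi)
      · exact fun i hi => hb0 i (Finset.mem_insert_of_mem hi)
      · exact fun i hi => hb1 i (Finset.mem_insert_of_mem hi)
    have hja : |a j| ≤ 1 := by
      rw [abs_of_nonneg (ha0 j (Finset.mem_insert_self j s))]
      exact ha1 j (Finset.mem_insert_self j s)
    have hBb : |∏ i ∈ s, b i| ≤ 1 := by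
      rw [Finset.abs_prod]
      apply Finset.prod_le_one
      · exact fun i _ => abs_nonneg _
      · intro i hi
        rw [abs_of_nonneg (hb0 i (Finset.mem_insert_of_mem hi))]
        exact hb1 i (Finset.mem_insert_of_mem hi)
    calc |a j * ∏ i ∈ s, a i - b j * ∏ i ∈ s, b i|
        = |a j * (∏ i ∈ s, a i - ∏ i ∈ s, b i) + (a j - b j) * ∏ i ∈ s, b i| := by
          ring_nf
      _ ≤ |a j * (∏ i ∈ s, a i - ∏ i ∈ s, b i)| + |(a j - b j) * ∏ i ∈ s, b i| :=
          abs_add_le _ _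
      _ = |a j| * |∏ i ∈ s, a i - ∏ i ∈ s, b i| + |a j - b j| * |∏ i ∈ s, b i| := by
          rw [abs_mul, abs_mul]
      _ ≤ 1 * (∑ i ∈ s, |a i - b i|) + |a j - b j| * 1 := by
          gcongr
      _ = |a j - b j| + ∑ i ∈ s, |a i - b i| := by ring

lemma my_comp_unif {X : Type*} [MetricSpace X] {f : X → ℝ} (hf : Continuous f)
    {K : Set X} (hK : IsCompact K) {P : ℕ → X → X}
    (hP : TendstoUniformlyOn (fun q x => P q x) id Filter.atTop K)
    {η : ℝ} (hη : 0 < η) :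
    ∀ᶠ q in Filter.atTop, ∀ x ∈ K, |f (P q x) - f x| < η := by
  rcases K.eq_empty_or_nonempty with rfl | hne
  · filter_upwards with q x hx
    simp at hx
  choose r hr hfr using fun v => Metric.continuous_iff.mp hf v (η / 2) (by positivity)
  obtain ⟨t, htK, hcover⟩ := hK.elim_nhds_subcover (fun v => Metric.ball v (r v / 2))
    (fun v _ => Metric.ball_mem_nhds v (half_pos (hr v)))
  have ht : t.Nonempty := by
    obtain ⟨x, hx⟩ := hne
    obtain ⟨v, hv, -⟩ := Set.mem_iUnion₂.mp (hcover hx)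
    exact ⟨v, hv⟩
  set δ : ℝ := t.inf' ht (fun v => r v / 2) with hδdef
  have hδ : 0 < δ := by
    rw [hδdef, Finset.lt_inf'_iff]
    exact fun v _ => half_pos (hr v)
  filter_upwards [Metric.tendstoUniformlyOn_iff.mp hP δ hδ] with q hq x hx
  obtain ⟨v, hv, hxv⟩ := Set.mem_iUnion₂.mp (hcover hx)
  have hxv' : dist x v < r v / 2 := Metric.mem_ball.mp hxv
  have hPx : dist x (P q x) < δ := hq x hx
  have hδle : δ ≤ r v / 2 := Finset.inf'_le _ hv
  have hPv : dist (P q x) v < r v := by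
    calc dist (P q x) v ≤ dist (P q x) x + dist x v := dist_triangle _ _ _
      _ < δ + r v / 2 := by rw [dist_comm]; exact add_lt_add hPx hxv'
      _ ≤ r v / 2 + r v / 2 := by linarith
      _ = r v := by ring
  have h1 : dist (f (P q x)) (f v) < η / 2 := hfr v _ hPv
  have h2 : dist (f x) (f v) < η / 2 := hfr v _ (lt_of_lt_of_le hxv' (by linarith [hr v]))
  calc |f (P q x) - f x| = dist (f (P q x)) (f x) := (Real.dist_eq _ _).symm
    _ ≤ dist (f (P q x)) (f v) + dist (f v) (f x) := dist_triangle _ _ _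
    _ = dist (f (P q x)) (f v) + dist (f x) (f v) := by rw [dist_comm (f v)]
    _ < η / 2 + η / 2 := add_lt_add h1 h2
    _ = η := by ring

lemma my_exists_partition {X : Type*} [MetricSpace X] {K : Set X} (hK : IsCompact K)
    (hne : K.Nonempty) {δ : ℝ} (hδ : 0 < δ) :
    ∃ (m : ℕ), 0 < m ∧ ∃ (x : Fin m → X) (θ : Fin m → X → ℝ),
      (∀ k, x k ∈ K) ∧ (∀ k, Continuous (θ k)) ∧ (∀ k y, 0 ≤ θ k y) ∧
      (∀ k y, θ k y ≤ 1) ∧ (∀ y ∈ K, ∑ k, θ k y = 1) ∧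
      (∀ k y, θ k y ≠ 0 → dist y (x k) < δ) := by
  obtain ⟨t, htK, hcover⟩ := hK.elim_nhds_subcover (fun v => Metric.ball v (δ / 2))
    (fun v _ => Metric.ball_mem_nhds v (half_pos hδ))
  have ht : t.Nonempty := by
    obtain ⟨y, hy⟩ := hne
    obtain ⟨v, hv, -⟩ := Set.mem_iUnion₂.mp (hcover hy)
    exact ⟨v, hv⟩
  have htcard : 0 < t.card := Finset.card_pos.mpr ht
  set m := t.card with hm
  set e : Fin m ≃ {v // v ∈ t} := (t.equivFin).symm with he
  set x : Fin m → X := fun k => (e k : X) with hx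
  set f : Fin m → X → ℝ := fun k y => max 0 (δ - dist y (x k)) with hfdef
  have hfcont : ∀ k, Continuous (f k) :=
    fun k => continuous_const.max (continuous_const.sub (continuous_dist.comp
      (continuous_id.prodMk continuous_const)))
  have hf0 : ∀ k y, 0 ≤ f k y := fun k y => le_max_left _ _
  have hfK : ∀ y ∈ K, ∃ k, δ / 2 ≤ f k y := by
    intro y hy
    obtain ⟨v, hv, hyv⟩ := Set.mem_iUnion₂.mp (hcover hy)
    refine ⟨e.symm ⟨v, hv⟩, ?_⟩
    have : dist y (x (e.symm ⟨v, hv⟩)) < δ / 2 := by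
      simp only [hx, Equiv.apply_symm_apply]
      exact Metric.mem_ball.mp hyv
    simp only [hfdef]
    rw [le_max_iff]
    right; linarith
  set D : X → ℝ := fun y => max (∑ k, f k y) (δ / 2) with hD
  have hDpos : ∀ y, 0 < D y := fun y => lt_of_lt_of_le (half_pos hδ) (le_max_right _ _)
  have hDcont : Continuous D := (continuous_finset_sum _ fun k _ => hfcont k).max continuous_const
  have hfleD : ∀ k y, f k y ≤ D y := by
    intro k y
    refine le_trans ?_ (le_max_left _ _)
    exact Finset.single_le_sum (fun k _ => hf0 k y) (Finset.mem_univ k)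
  refine ⟨m, htcard, x, fun k y => f k y / D y, ?_, ?_, ?_, ?_, ?_, ?_⟩
  · intro k; exact htK _ (e k).2
  · intro k; exact (hfcont k).div hDcont (fun y => (hDpos y).ne')
  · intro k y; exact div_nonneg (hf0 k y) (hDpos y).le
  · intro k y; exact div_le_one_of_le₀ (hfleD k y) (hDpos y).le
  · intro y hy
    obtain ⟨k₀, hk₀⟩ := hfK y hy
    have hsum : δ / 2 ≤ ∑ k, f k y :=
      le_trans hk₀ (Finset.single_le_sum (fun k _ => hf0 k y) (Finset.mem_univ k₀))
    have hDy : D y = ∑ k, f k y := max_eq_left hsum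
    rw [← Finset.sum_div, hDy, div_self]
    linarith [half_pos hδ]
  · intro k y hne'
    by_contra hdist
    push_neg at hdist
    apply hne'
    have h1 : δ - dist y (x k) ≤ 0 := by linarith
    have h2 : f k y = 0 := max_eq_left h1
    show f k y / D y = 0
    rw [h2, zero_div]

/-- **MIONet approximation theorem on metric spaces** (Theorem 3.1).
`X i` are metric spaces equipped with discretizations `φ i q : X i → ℝ^q`,
reconstructions `ψ i q : ℝ^q → X i` whose compositions (the projections)
converge to the identity uniformly on every compact set.  Any continuous map
`𝒢` from a product of compact sets `K i ⊆ X i` to a Banach space `Y` can be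
approximated in the uniform norm by a finite sum of products of the form
`g j 1 (φ (q 1) v₁) ⋯ g j n (φ (q n) vₙ) • u j`. -/
theorem mionet_approximation_metric_spaces
    (n : ℕ) (hn : 1 ≤ n) (X : Fin n → Type*) [∀ i, MetricSpace (X i)]
    {Y : Type*} [NormedAddCommGroup Y] [NormedSpace ℝ Y] [CompleteSpace Y]
    (φ : ∀ i : Fin n, ∀ q : ℕ, X i → (Fin q → ℝ))
    (ψ : ∀ i : Fin n, ∀ q : ℕ, (Fin q → ℝ) → X i)
    (hφ : ∀ i q, Continuous (φ i q))
    (hψ : ∀ i q, ContinuousOn (ψ i q) (Set.range (φ i q)))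
    (hproj : ∀ i, ∀ K : Set (X i), IsCompact K →
      TendstoUniformlyOn (fun q x => ψ i q (φ i q x)) id Filter.atTop K)
    (K : ∀ i, Set (X i)) (hK : ∀ i, IsCompact (K i))
    (G : (∀ i, X i) → Y) (hG : ContinuousOn G (Set.univ.pi K))
    (ε : ℝ) (hε : 0 < ε) :
    ∃ p : ℕ, 0 < p ∧ ∃ q : Fin n → ℕ, (∀ i, 0 < q i) ∧
      ∃ (g : ∀ _ : Fin p, ∀ i : Fin n, (Fin (q i) → ℝ) → ℝ) (u : Fin p → Y),
        (∀ j i, Continuous (g j i)) ∧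
        ∀ v : ∀ i, X i, (∀ i, v i ∈ K i) →
          ‖G v - ∑ j, (∏ i, g j i (φ i (q i) (v i))) • u j‖ < ε := by
  classical
  by_cases hempty : ∀ i, (K i).Nonempty
  swap
  · -- some K i is empty, conclusion is vacuous
    push_neg at hempty
    obtain ⟨i₀, hi₀⟩ := hempty
    refine ⟨1, one_pos, fun _ => 1, fun _ => one_pos,
      fun _ _ _ => 0, fun _ => 0, fun _ _ => continuous_const, ?_⟩
    intro v hv
    simpa [hi₀] using hv i₀
  -- main case
  set S := Set.univ.pi K with hSdef
  have hS : IsCompact S := isCompact_univ_pi hK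
  obtain ⟨C, hC⟩ := hS.exists_bound_of_continuousOn hG
  set M : ℝ := max C 1 with hMdef
  have hM : (0:ℝ) < M := lt_of_lt_of_le one_pos (le_max_right _ _)
  have hGM : ∀ x ∈ S, ‖G x‖ ≤ M := fun x hx => le_trans (hC x hx) (le_max_left _ _)
  -- uniform continuity of G on S
  have hGu : UniformContinuousOn G S := hS.uniformContinuousOn_of_continuous hG
  obtain ⟨δ, hδ, hGδ⟩ := Metric.uniformContinuousOn_iff.mp hGu (ε / 2) (by positivity)
  -- partitions of unity on each K i
  choose m hm xpt θ hxK hθc hθ0 hθ1 hθsum hθsupp using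
    fun i => my_exists_partition (hK i) (hempty i) hδ
  -- p and the index equivalence
  set p : ℕ := ∏ i, m i with hpdef
  have hp : 0 < p := Finset.prod_pos fun i _ => hm i
  set e : (∀ i, Fin (m i)) ≃ Fin p :=
    Fintype.equivFinOfCardEq (by simp [Fintype.card_pi, hpdef]) with hedef
  -- the small parameter η
  have hnR : (0:ℝ) < n := by exact_mod_cast hn
  have hpR : (0:ℝ) < p := by exact_mod_cast hp
  set η : ℝ := ε / (4 * p * n * M) with hηdef
  have hη : 0 < η := by
    rw [hηdef]; positivity
  -- choose q i large enough
  have hqex : ∀ i, ∃ q : ℕ, 0 < q ∧ ∀ k, ∀ x ∈ K i,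
      |θ i k (ψ i q (φ i q x)) - θ i k x| < η := by
    intro i
    have h1 : ∀ᶠ q in Filter.atTop, ∀ k : Fin (m i), ∀ x ∈ K i,
        |θ i k (ψ i q (φ i q x)) - θ i k x| < η := by
      rw [Filter.eventually_all]
      intro k
      exact my_comp_unif (hθc i k) (hK i) (hproj i (K i) (hK i)) hη
    obtain ⟨q, hq1, hq2⟩ := ((Filter.eventually_ge_atTop 1).and h1).exists
    exact ⟨q, hq1, hq2⟩
  choose q hq1 hq2 using hqex
  -- Tietze extensions
  have hTietze : ∀ i (k : Fin (m i)), ∃ g0 : (Fin (q i) → ℝ) → ℝ,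
      Continuous g0 ∧ (∀ y, 0 ≤ g0 y) ∧ (∀ y, g0 y ≤ 1) ∧
      ∀ x ∈ K i, g0 (φ i (q i) x) = θ i k (ψ i (q i) (φ i (q i) x)) := by
    intro i k
    set s : Set (Fin (q i) → ℝ) := φ i (q i) '' K i with hsdef
    have hscl : IsClosed s := ((hK i).image (hφ i (q i))).isClosed
    have hcont : ContinuousOn (fun y => θ i k (ψ i (q i) y)) s :=
      (hθc i k).comp_continuousOn ((hψ i (q i)).mono (Set.image_subset_range _ _))
    obtain ⟨g₀, hg₀⟩ := ContinuousMap.exists_restrict_eq (Y := ℝ) hscl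
      ⟨s.restrict (fun y => θ i k (ψ i (q i) y)), hcont.restrict⟩
    refine ⟨fun y => max 0 (min 1 (g₀ y)), ?_, fun y => le_max_left _ _,
      fun y => max_le (by norm_num) (min_le_left _ _), ?_⟩
    · exact continuous_const.max (continuous_const.min g₀.continuous)
    · intro x hx
      have hmem : φ i (q i) x ∈ s := Set.mem_image_of_mem _ hx
      have hval : g₀ (φ i (q i) x) = θ i k (ψ i (q i) (φ i (q i) x)) :=
        ContinuousMap.congr_fun hg₀ ⟨φ i (q i) x, hmem⟩
      show max 0 (min 1 (g₀ (φ i (q i) x))) = _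
      rw [hval, min_eq_right (hθ1 i k _), max_eq_right (hθ0 i k _)]
  choose gt hgc hg0 hg1 hgK using hTietze
  -- assemble
  refine ⟨p, hp, q, hq1, fun j i => gt i (e.symm j i), fun j => G (fun i => xpt i (e.symm j i)),
    fun j i => hgc i (e.symm j i), ?_⟩
  intro v hv
  have hvS : v ∈ S := Set.mem_univ_pi.mpr hv
  set a : (∀ i, Fin (m i)) → ℝ := fun t => ∏ i, θ i (t i) (v i) with hadef
  set b : (∀ i, Fin (m i)) → ℝ := fun t => ∏ i, gt i (t i) (φ i (q i) (v i)) with hbdef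
  set w : (∀ i, Fin (m i)) → (∀ i, X i) := fun t i => xpt i (t i) with hwdef
  have hwS : ∀ t, w t ∈ S := fun t => Set.mem_univ_pi.mpr fun i => hxK i (t i)
  have ha0 : ∀ t, 0 ≤ a t := fun t => Finset.prod_nonneg fun i _ => hθ0 i (t i) (v i)
  have hsumrw : (∑ j, (∏ i, gt i (e.symm j i) (φ i (q i) (v i))) •
      G (fun i => xpt i (e.symm j i))) = ∑ t, b t • G (w t) :=
    Equiv.sum_comp e.symm (fun t => b t • G (w t))
  rw [hsumrw]
  have hsum1 : ∑ t, a t = 1 := by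
    have hps := Finset.prod_univ_sum (fun i : Fin n => (Finset.univ : Finset (Fin (m i))))
      (fun i k => θ i k (v i))
    rw [Fintype.piFinset_univ] at hps
    rw [hadef, ← hps]
    exact Finset.prod_eq_one fun i _ => hθsum i (v i) (hv i)
  have hsplit : G v - ∑ t, b t • G (w t)
      = (G v - ∑ t, a t • G (w t)) + ∑ t, (a t - b t) • G (w t) := by
    have h : ∑ t, (a t - b t) • G (w t)
        = ∑ t, a t • G (w t) - ∑ t, b t • G (w t) := by
      rw [← Finset.sum_sub_distrib]
      exact Finset.sum_congr rfl fun t _ => sub_smul _ _ _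
    rw [h]; abel
  rw [hsplit]
  have h1 : ‖G v - ∑ t, a t • G (w t)‖ ≤ ε / 2 := by
    have hrw : G v - ∑ t, a t • G (w t) = ∑ t, a t • (G v - G (w t)) := by
      calc G v - ∑ t, a t • G (w t)
          = (∑ t, a t) • G v - ∑ t, a t • G (w t) := by rw [hsum1, one_smul]
        _ = ∑ t, (a t • G v - a t • G (w t)) := by
            rw [Finset.sum_smul, Finset.sum_sub_distrib]
        _ = ∑ t, a t • (G v - G (w t)) :=
            Finset.sum_congr rfl fun t _ => (smul_sub _ _ _).symm
    rw [hrw]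
    calc ‖∑ t, a t • (G v - G (w t))‖ ≤ ∑ t, ‖a t • (G v - G (w t))‖ := norm_sum_le _ _
      _ ≤ ∑ t, a t * (ε / 2) := by
          apply Finset.sum_le_sum
          intro t _
          rw [norm_smul, Real.norm_eq_abs, abs_of_nonneg (ha0 t)]
          rcases eq_or_lt_of_le (ha0 t) with h | h
          · rw [← h]; simp
          · have hd : ∀ i, dist (v i) (w t i) < δ := by
              intro i
              apply hθsupp i (t i) (v i)
              intro h0
              exact absurd (Finset.prod_eq_zero (Finset.mem_univ i) h0) (ne_of_gt h)
            have hdist : dist v (w t) < δ := (dist_pi_lt_iff hδ).mpr hd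
            have hGd := hGδ v hvS (w t) (hwS t) hdist
            have hnorm : ‖G v - G (w t)‖ ≤ ε / 2 := le_of_lt (by rwa [← dist_eq_norm] )
            exact mul_le_mul_of_nonneg_left hnorm (ha0 t)
      _ = (∑ t, a t) * (ε / 2) := (Finset.sum_mul _ _ _).symm
      _ = ε / 2 := by rw [hsum1, one_mul]
  have h2 : ‖∑ t, (a t - b t) • G (w t)‖ ≤ ε / 4 := by
    have hterm : ∀ t, ‖(a t - b t) • G (w t)‖ ≤ (n * η) * M := by
      intro t
      rw [norm_smul, Real.norm_eq_abs]
      have hab : |a t - b t| ≤ n * η := by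
        have hprod : |a t - b t| ≤ ∑ i, |θ i (t i) (v i) - gt i (t i) (φ i (q i) (v i))| := by
          apply my_abs_prod_sub_prod_le
          · exact fun i _ => hθ0 i (t i) (v i)
          · exact fun i _ => hθ1 i (t i) (v i)
          · exact fun i _ => hg0 i (t i) _
          · exact fun i _ => hg1 i (t i) _
        refine le_trans hprod ?_
        have hbound : ∀ i : Fin n,
            |θ i (t i) (v i) - gt i (t i) (φ i (q i) (v i))| ≤ η := by
          intro i
          rw [hgK i (t i) (v i) (hv i), abs_sub_comm]
          exact le_of_lt (hq2 i (t i) (v i) (hv i))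
        calc ∑ i, |θ i (t i) (v i) - gt i (t i) (φ i (q i) (v i))|
            ≤ ∑ _i : Fin n, η := Finset.sum_le_sum fun i _ => hbound i
          _ = n * η := by rw [Finset.sum_const, Finset.card_univ, Fintype.card_fin,
              nsmul_eq_mul]
      exact mul_le_mul hab (hGM (w t) (hwS t)) (norm_nonneg _) (by positivity)
    calc ‖∑ t, (a t - b t) • G (w t)‖ ≤ ∑ t, ‖(a t - b t) • G (w t)‖ := norm_sum_le _ _
      _ ≤ ∑ _t : (∀ i, Fin (m i)), (n * η) * M := Finset.sum_le_sum fun t _ => hterm t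
      _ = p * ((n * η) * M) := by
          rw [Finset.sum_const, Finset.card_univ, nsmul_eq_mul]
          congr 1
          simp [Fintype.card_pi, hpdef]
      _ = ε / 4 := by
          rw [hηdef]
          field_simp
  calc ‖(G v - ∑ t, a t • G (w t)) + ∑ t, (a t - b t) • G (w t)‖
      ≤ ‖G v - ∑ t, a t • G (w t)‖ + ‖∑ t, (a t - b t) • G (w t)‖ := norm_add_le _ _
    _ ≤ ε / 2 + ε / 4 := add_le_add h1 h2
    _ < ε := by linarith
end

section
/- Let M > 0 and S₀ > 0, and let A, B ⊆ ℝ² be Lebesgue-measurable sets contained in the closed ball of radius M centered at the origin, with Lebesgue measures μ(A) ≥ S₀ and μ(B) ≥ S₀. Define the centroids C(A) := μ(A)^{-1} ∫_A x dx and C(B) := μ(B)^{-1} ∫_B x dx (Bochner integrals of the identity). Then ‖C(A) − C(B)‖ ≤ (2M/S₀)·μ(A Δ B), where A Δ B = (A \ B) ∪ (B \ A) is the symmetric difference. -/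
open MeasureTheory

/-- **Stability of centroids under symmetric difference.**  If `A, B ⊆ ℝ²` are
measurable sets contained in the closed ball of radius `M` around the origin and
each has Lebesgue measure at least `S₀ > 0`, then the Euclidean distance between
their centroids `C(A) = μ(A)⁻¹ ∫_A x dx` and `C(B) = μ(B)⁻¹ ∫_B x dx` is at most
`(2M / S₀) · μ(A Δ B)`. -/
theorem centroid_dist_le_of_symmDiff
    (M S₀ : ℝ) (hM : 0 < M) (hS : 0 < S₀)
    (A B : Set (EuclideanSpace ℝ (Fin 2)))
    (hAmeas : MeasurableSet A) (hBmeas : MeasurableSet B)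
    (hAball : A ⊆ Metric.closedBall 0 M) (hBball : B ⊆ Metric.closedBall 0 M)
    (hAvol : ENNReal.ofReal S₀ ≤ volume A) (hBvol : ENNReal.ofReal S₀ ≤ volume B) :
    ‖(volume A).toReal⁻¹ • (∫ x in A, x) - (volume B).toReal⁻¹ • (∫ x in B, x)‖ ≤
      (2 * M / S₀) * (volume ((A \ B) ∪ (B \ A))).toReal := by
  -- Finiteness of all the measures involved
  have hballfin : volume (Metric.closedBall (0 : EuclideanSpace ℝ (Fin 2)) M) < ⊤ :=
    measure_closedBall_lt_top
  have hAfin : volume A < ⊤ := lt_of_le_of_lt (measure_mono hAball) hballfin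
  have hBfin : volume B < ⊤ := lt_of_le_of_lt (measure_mono hBball) hballfin
  have hABfin : volume (A \ B) < ⊤ :=
    lt_of_le_of_lt (measure_mono Set.diff_subset) hAfin
  have hBAfin : volume (B \ A) < ⊤ :=
    lt_of_le_of_lt (measure_mono Set.diff_subset) hBfin
  -- notation
  set a := (volume A).toReal with ha_def
  set b := (volume B).toReal with hb_def
  set dAB := (volume (A \ B)).toReal with hdAB_def
  set dBA := (volume (B \ A)).toReal with hdBA_def
  have hSa : S₀ ≤ a := by
    rw [ha_def]
    exact (ENNReal.ofReal_le_iff_le_toReal hAfin.ne).mp hAvol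
  have hSb : S₀ ≤ b := by
    rw [hb_def]
    exact (ENNReal.ofReal_le_iff_le_toReal hBfin.ne).mp hBvol
  have ha0 : 0 < a := lt_of_lt_of_le hS hSa
  have hb0 : 0 < b := lt_of_lt_of_le hS hSb
  have hdAB0 : 0 ≤ dAB := ENNReal.toReal_nonneg
  have hdBA0 : 0 ≤ dBA := ENNReal.toReal_nonneg
  -- symmetric difference measure
  have hdisj : Disjoint (A \ B) (B \ A) := disjoint_sdiff_sdiff
  have hΔ : (volume ((A \ B) ∪ (B \ A))).toReal = dAB + dBA := by
    rw [measure_union hdisj (hBmeas.diff hAmeas),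
      ENNReal.toReal_add hABfin.ne hBAfin.ne]
  -- integrability
  have hint : IntegrableOn (fun x => x) (Metric.closedBall (0 : EuclideanSpace ℝ (Fin 2)) M)
      volume := continuous_id.continuousOn.integrableOn_compact (isCompact_closedBall _ _)
  have hintA : IntegrableOn (fun x => x) A volume := hint.mono_set hAball
  have hintB : IntegrableOn (fun x => x) B volume := hint.mono_set hBball
  -- split integrals
  have hsplitA : (∫ x in A ∩ B, x) + (∫ x in A \ B, x) = ∫ x in A, x :=
    integral_inter_add_diff hBmeas hintA
  have hsplitB : (∫ x in B ∩ A, x) + (∫ x in B \ A, x) = ∫ x in B, x :=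
    integral_inter_add_diff hAmeas hintB
  have hIdiff : (∫ x in A, x) - (∫ x in B, x) = (∫ x in A \ B, x) - (∫ x in B \ A, x) := by
    rw [← hsplitA, ← hsplitB, Set.inter_comm B A]
    abel
  -- measure arithmetic: a = μ(A∩B) + dAB, b = μ(A∩B) + dBA
  have hainterfin : volume (A ∩ B) < ⊤ :=
    lt_of_le_of_lt (measure_mono Set.inter_subset_left) hAfin
  have hmA : a = (volume (A ∩ B)).toReal + dAB := by
    rw [ha_def, ← measure_inter_add_diff A hBmeas,
      ENNReal.toReal_add hainterfin.ne hABfin.ne]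
  have hmB : b = (volume (A ∩ B)).toReal + dBA := by
    rw [hb_def, ← measure_inter_add_diff B hAmeas, Set.inter_comm B A,
      ENNReal.toReal_add hainterfin.ne hBAfin.ne]
  -- norm bounds on integrals
  have hnormA : ∀ x ∈ A, ‖x‖ ≤ M := fun x hx => by
    simpa [dist_eq_norm] using Metric.mem_closedBall.mp (hAball hx)
  have hnormB : ∀ x ∈ B, ‖x‖ ≤ M := fun x hx => by
    simpa [dist_eq_norm] using Metric.mem_closedBall.mp (hBball hx)
  have hIAB : ‖∫ x in A \ B, x‖ ≤ M * dAB :=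
    norm_setIntegral_le_of_norm_le_const hABfin
      (fun x hx => hnormA x hx.1)
  have hIBA : ‖∫ x in B \ A, x‖ ≤ M * dBA :=
    norm_setIntegral_le_of_norm_le_const hBAfin
      (fun x hx => hnormB x hx.1)
  have hIB : ‖∫ x in B, x‖ ≤ M * b :=
    norm_setIntegral_le_of_norm_le_const hBfin hnormB
  -- main decomposition
  have key : (volume A).toReal⁻¹ • (∫ x in A, x) - (volume B).toReal⁻¹ • (∫ x in B, x)
      = a⁻¹ • ((∫ x in A, x) - (∫ x in B, x)) + (a⁻¹ - b⁻¹) • (∫ x in B, x) := by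
    rw [smul_sub, sub_smul]
    abel
  rw [key, hΔ]
  have h1 : ‖a⁻¹ • ((∫ x in A, x) - (∫ x in B, x))‖ ≤ a⁻¹ * (M * (dAB + dBA)) := by
    rw [norm_smul, Real.norm_eq_abs, abs_of_pos (inv_pos.mpr ha0)]
    apply mul_le_mul_of_nonneg_left _ (inv_pos.mpr ha0).le
    rw [hIdiff]
    calc ‖(∫ x in A \ B, x) - (∫ x in B \ A, x)‖
        ≤ ‖∫ x in A \ B, x‖ + ‖∫ x in B \ A, x‖ := norm_sub_le _ _
      _ ≤ M * dAB + M * dBA := add_le_add hIAB hIBA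
      _ = M * (dAB + dBA) := by ring
  have habs : |a⁻¹ - b⁻¹| ≤ (dAB + dBA) / (a * b) := by
    rw [abs_le]
    constructor
    · rw [inv_eq_one_div, inv_eq_one_div, div_sub_div _ _ ha0.ne' hb0.ne',
        neg_le, ← neg_div, div_le_div_iff₀ (by positivity) (by positivity)]
      have hle : a - b ≤ dAB + dBA := by linarith [hmA, hmB]
      linarith [mul_le_mul_of_nonneg_right hle (mul_pos ha0 hb0).le]
    · rw [inv_eq_one_div, inv_eq_one_div, div_sub_div _ _ ha0.ne' hb0.ne',
        div_le_div_iff₀ (by positivity) (by positivity)]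
      have hle : b - a ≤ dAB + dBA := by linarith [hmA, hmB]
      linarith [mul_le_mul_of_nonneg_right hle (mul_pos ha0 hb0).le]
  have h2 : ‖(a⁻¹ - b⁻¹) • (∫ x in B, x)‖ ≤ (dAB + dBA) / (a * b) * (M * b) := by
    rw [norm_smul, Real.norm_eq_abs]
    exact mul_le_mul habs hIB (norm_nonneg _) (by positivity)
  calc ‖a⁻¹ • ((∫ x in A, x) - (∫ x in B, x)) + (a⁻¹ - b⁻¹) • (∫ x in B, x)‖
      ≤ a⁻¹ * (M * (dAB + dBA)) + (dAB + dBA) / (a * b) * (M * b) :=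
        le_trans (norm_add_le _ _) (add_le_add h1 h2)
    _ = 2 * M / a * (dAB + dBA) := by field_simp; ring
    _ ≤ 2 * M / S₀ * (dAB + dBA) := by
        apply mul_le_mul_of_nonneg_right _ (by positivity)
        apply div_le_div_of_nonneg_left (by positivity) hS hSa
end
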